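/- arXiv:2507.18819 — 2 statements merged into one kernel-verified Lean document; each statement's English description precedes it below -/
import Mathlib

section
/- For every n ∈ ℕ and every m ∈ ℕ with m < n, ∫_{−1}^{1} x^m · q_n(x) dx = 0; that is, the n-th Rodrigues (Legendre) polynomial is orthogonal on [−1, 1] to every polynomial of degree strictly less than n. -/
open Polynomial intervalIntegral

/-- Iterated derivative of a polynomial evaluation. -/
lemma iteratedDeriv_polyEval (p : ℝ[X]) (k : ℕ) :
    iteratedDeriv k (fun x => p.eval x) = fun x => (derivative^[k] p).eval x := by
  induction k with
  | zero => simp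
  | succ k ih =>
    rw [iteratedDeriv_succ, ih]
    funext x
    rw [Function.iterate_succ_apply']
    exact Polynomial.deriv _

lemma eval_iter_deriv_root (n k : ℕ) (hk : k < n) (a : ℝ) (ha : a ^ 2 - 1 = 0) :
    (derivative^[k] (((X : ℝ[X]) ^ 2 - 1) ^ n)).eval a = 0 := by
  obtain ⟨r, hr⟩ := Polynomial.pow_sub_dvd_iterate_derivative_pow ((X : ℝ[X]) ^ 2 - 1) n k
  obtain ⟨j, hj⟩ := Nat.exists_eq_succ_of_ne_zero (Nat.sub_ne_zero_of_lt hk)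
  rw [hr, hj, eval_mul, eval_pow, eval_sub, eval_pow, eval_X, eval_one, ha]
  simp

lemma aux_integral (n : ℕ) : ∀ m k : ℕ, m < k → k ≤ n →
    ∫ x in (-1 : ℝ)..1, x ^ m * (derivative^[k] (((X : ℝ[X]) ^ 2 - 1) ^ n)).eval x = 0 := by
  intro m
  induction m with
  | zero =>
    intro k hmk hkn
    obtain ⟨j, rfl⟩ := Nat.exists_eq_succ_of_ne_zero hmk.ne'
    have hderiv : ∀ x ∈ Set.uIcc (-1 : ℝ) 1,
        HasDerivAt (fun x => (derivative^[j] (((X : ℝ[X]) ^ 2 - 1) ^ n)).eval x)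
          ((derivative^[j + 1] (((X : ℝ[X]) ^ 2 - 1) ^ n)).eval x) x := by
      intro x _
      rw [Function.iterate_succ_apply']
      exact Polynomial.hasDerivAt _ x
    have := intervalIntegral.integral_eq_sub_of_hasDerivAt hderiv
      ((Polynomial.continuous _).intervalIntegrable _ _)
    simp only [pow_zero, one_mul]
    rw [this, eval_iter_deriv_root n j (by omega) 1 (by norm_num),
      eval_iter_deriv_root n j (by omega) (-1) (by norm_num), sub_zero]
  | succ m ih =>
    intro k hmk hkn
    obtain ⟨j, rfl⟩ := Nat.exists_eq_succ_of_ne_zero (by omega : k ≠ 0)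
    have hu : ∀ x ∈ Set.uIcc (-1 : ℝ) 1,
        HasDerivAt (fun x : ℝ => x ^ (m + 1)) (((m : ℝ) + 1) * x ^ m) x := by
      intro x _
      simpa using hasDerivAt_pow (m + 1) x
    have hv : ∀ x ∈ Set.uIcc (-1 : ℝ) 1,
        HasDerivAt (fun x => (derivative^[j] (((X : ℝ[X]) ^ 2 - 1) ^ n)).eval x)
          ((derivative^[j + 1] (((X : ℝ[X]) ^ 2 - 1) ^ n)).eval x) x := by
      intro x _
      rw [Function.iterate_succ_apply']
      exact Polynomial.hasDerivAt _ x
    have key := intervalIntegral.integral_mul_deriv_eq_deriv_mul hu hv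
      ((continuous_const.mul (continuous_pow m)).intervalIntegrable _ _)
      ((Polynomial.continuous _).intervalIntegrable _ _)
    rw [key, eval_iter_deriv_root n j (by omega) 1 (by norm_num),
      eval_iter_deriv_root n j (by omega) (-1) (by norm_num)]
    have : ∫ x in (-1 : ℝ)..1,
        ((m : ℝ) + 1) * x ^ m * (derivative^[j] (((X : ℝ[X]) ^ 2 - 1) ^ n)).eval x
        = ((m : ℝ) + 1) * ∫ x in (-1 : ℝ)..1,
            x ^ m * (derivative^[j] (((X : ℝ[X]) ^ 2 - 1) ^ n)).eval x := by
      rw [← intervalIntegral.integral_const_mul]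
      congr 1; funext x; ring
    rw [this, ih j (by omega) (by omega)]
    ring

/-- The (unnormalized) Rodrigues polynomial `q_n(x) = dⁿ/dxⁿ[(x² − 1)ⁿ]`. -/
noncomputable def rodrigues (n : ℕ) : ℝ → ℝ :=
  iteratedDeriv n (fun x : ℝ => (x ^ 2 - 1) ^ n)

/-- The Rodrigues (Legendre) polynomial `q_n` is orthogonal on `[−1, 1]` to every
monomial `x^m` with `m < n`. -/
theorem rodrigues_orthogonal (n m : ℕ) (hmn : m < n) :
    ∫ x in (-1 : ℝ)..1, x ^ m * rodrigues n x = 0 := by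
  have hfun : (fun x : ℝ => (x ^ 2 - 1) ^ n)
      = fun x => (((X : ℝ[X]) ^ 2 - 1) ^ n).eval x := by
    funext x; simp
  have : rodrigues n = fun x => (derivative^[n] (((X : ℝ[X]) ^ 2 - 1) ^ n)).eval x := by
    rw [rodrigues, hfun, iteratedDeriv_polyEval]
  rw [this]
  exact aux_integral n m n hmn le_rfl
end

section
/- Let n ≥ 1 and let ξ_1, …, ξ_n ∈ (−1, 1) be the n distinct roots of the Rodrigues polynomial q_n. Then there exist weights w_1, …, w_n ∈ ℝ such that for every real polynomial f of degree at most 2n − 1, ∫_{−1}^{1} f(x) dx = ∑_{i=1}^{n} w_i f(ξ_i). (Exactness of n-point Gauss–Legendre quadrature for polynomials of degree up to 2n − 1.) -/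
open Finset

namespace GaussLegendreAux

open Polynomial intervalIntegral MeasureTheory

/-- The polynomial `(X² - 1)ⁿ`. -/
noncomputable def P (n : ℕ) : Polynomial ℝ := ((X : Polynomial ℝ) ^ 2 - 1) ^ n

lemma iteratedDeriv_eval (p : Polynomial ℝ) (k : ℕ) :
    iteratedDeriv k (fun x => p.eval x) = fun x => (derivative^[k] p).eval x := by
  induction k with
  | zero => simp
  | succ k ih =>
    rw [iteratedDeriv_succ, ih, Function.iterate_succ_apply']
    funext x
    exact (((derivative^[k] p)).hasDerivAt x).deriv

lemma rodrigues_eq (n : ℕ) (x : ℝ) :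
    rodrigues n x = (derivative^[n] (P n)).eval x := by
  have h : (fun x : ℝ => (x ^ 2 - 1) ^ n) = fun x => (P n).eval x := by
    funext y; simp [P]
  rw [rodrigues, h, iteratedDeriv_eval]

lemma monic_P (n : ℕ) : (P n).Monic := by
  have h : ((X : Polynomial ℝ) ^ 2 - 1) = X ^ 2 - C 1 := by rw [C_1]
  rw [P, h]
  exact (monic_X_pow_sub_C (1 : ℝ) two_ne_zero).pow n

lemma natDegree_P (n : ℕ) : (P n).natDegree = 2 * n := by
  have h : ((X : Polynomial ℝ) ^ 2 - 1) = X ^ 2 - C 1 := by rw [C_1]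
  rw [P, h, natDegree_pow, natDegree_X_pow_sub_C]
  ring

lemma coeff_R (n : ℕ) : (derivative^[n] (P n)).coeff n = ((n + n).descFactorial n : ℝ) := by
  rw [Polynomial.coeff_iterate_derivative]
  have h : (P n).coeff (n + n) = 1 := by
    have := (monic_P n).leadingCoeff
    rwa [leadingCoeff, natDegree_P, two_mul] at this
  rw [h, nsmul_eq_mul, mul_one]

lemma coeff_R_ne_zero (n : ℕ) : (derivative^[n] (P n)).coeff n ≠ 0 := by
  rw [coeff_R]
  have : (n + n).descFactorial n ≠ 0 := by
    rw [Ne, Nat.descFactorial_eq_zero_iff_lt]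
    omega
  exact_mod_cast this

lemma R_ne_zero (n : ℕ) : derivative^[n] (P n) ≠ 0 := fun h => by
  simpa [h] using coeff_R_ne_zero n

lemma natDegree_R (n : ℕ) : (derivative^[n] (P n)).natDegree = n := by
  refine le_antisymm ?_ (le_natDegree_of_ne_zero (coeff_R_ne_zero n))
  have := Polynomial.natDegree_iterate_derivative (P n) n
  rwa [natDegree_P, two_mul, Nat.add_sub_cancel] at this

lemma eval_iter_deriv_P_eq_zero {n k : ℕ} (hk : k < n) {a : ℝ} (ha : a = 1 ∨ a = -1) :
    (derivative^[k] (P n)).eval a = 0 := by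
  have hdvd : (X - C a) ^ n ∣ P n := by
    refine ⟨(X + C a) ^ n, ?_⟩
    rw [P, ← mul_pow]
    congr 1
    have h2 : (C a : Polynomial ℝ) * C a = 1 := by
      rw [← C_mul, ← C_1]
      rcases ha with rfl | rfl <;> norm_num
    linear_combination h2
  have h := Polynomial.pow_sub_dvd_iterate_derivative_of_pow_dvd k hdvd
  have h1 : (X - C a) ∣ derivative^[k] (P n) :=
    dvd_trans (dvd_pow_self _ (Nat.sub_ne_zero_of_lt hk)) h
  exact dvd_iff_isRoot.mp h1

lemma parts {n k : ℕ} (hk : k < n) (s : Polynomial ℝ) :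
    ∫ x in (-1 : ℝ)..1, (derivative^[k + 1] (P n)).eval x * s.eval x
      = - ∫ x in (-1 : ℝ)..1, (derivative^[k] (P n)).eval x * s.derivative.eval x := by
  have hu : ∀ x ∈ Set.uIcc (-1 : ℝ) 1,
      HasDerivAt (fun x => (derivative^[k] (P n)).eval x)
        ((derivative^[k + 1] (P n)).eval x) x := by
    intro x _
    rw [Function.iterate_succ_apply']
    exact (derivative^[k] (P n)).hasDerivAt x
  have hv : ∀ x ∈ Set.uIcc (-1 : ℝ) 1,
      HasDerivAt (fun x => s.eval x) (s.derivative.eval x) x :=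
    fun x _ => s.hasDerivAt x
  have hint1 : IntervalIntegrable (fun x => (derivative^[k + 1] (P n)).eval x)
      volume (-1 : ℝ) 1 := ((derivative^[k + 1] (P n)).continuous).intervalIntegrable _ _
  have hint2 : IntervalIntegrable (fun x => s.derivative.eval x) volume (-1 : ℝ) 1 :=
    (s.derivative.continuous).intervalIntegrable _ _
  have h := intervalIntegral.integral_deriv_mul_eq_sub hu hv hint1 hint2
  rw [eval_iter_deriv_P_eq_zero hk (Or.inl rfl),
    eval_iter_deriv_P_eq_zero hk (Or.inr rfl), zero_mul, zero_mul, sub_zero] at h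
  have hA : IntervalIntegrable (fun x => (derivative^[k + 1] (P n)).eval x * s.eval x)
      volume (-1 : ℝ) 1 :=
    (((derivative^[k + 1] (P n)).continuous).mul s.continuous).intervalIntegrable _ _
  have hB : IntervalIntegrable
      (fun x => (derivative^[k] (P n)).eval x * s.derivative.eval x) volume (-1 : ℝ) 1 :=
    (((derivative^[k] (P n)).continuous).mul s.derivative.continuous).intervalIntegrable _ _
  rw [intervalIntegral.integral_add hA hB] at h
  linarith

lemma shift (n : ℕ) : ∀ j ≤ n, ∀ s : Polynomial ℝ,
    ∫ x in (-1 : ℝ)..1, (derivative^[j] (P n)).eval x * s.eval x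
      = (-1 : ℝ) ^ j * ∫ x in (-1 : ℝ)..1, (P n).eval x * (derivative^[j] s).eval x := by
  intro j
  induction j with
  | zero => intro _ s; simp
  | succ j ih =>
    intro hj s
    have hjn : j < n := by omega
    rw [parts hjn s, ih (le_of_lt hjn) s.derivative]
    rw [← Function.iterate_succ_apply]
    ring

lemma orth {n : ℕ} {r : Polynomial ℝ} (hr : r.natDegree < n) :
    ∫ x in (-1 : ℝ)..1, (derivative^[n] (P n)).eval x * r.eval x = 0 := by
  rw [shift n n le_rfl r, Polynomial.iterate_derivative_eq_zero hr]
  simp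

end GaussLegendreAux

/-- Exactness of `n`-point Gauss–Legendre quadrature: if `ξ_1 < ⋯ < ξ_n` are the `n`
distinct roots of the Rodrigues polynomial `q_n` in `(−1, 1)`, then there exist weights
`w_i` such that `∫_{−1}^{1} f = ∑ w_i f(ξ_i)` for every polynomial `f` of degree at
most `2n − 1`. -/
theorem gauss_legendre_exactness
    (n : ℕ) (hn : 1 ≤ n) (ξ : Fin n → ℝ) (hmono : StrictMono ξ)
    (hmem : ∀ i, ξ i ∈ Set.Ioo (-1 : ℝ) 1)
    (hroot : ∀ i, rodrigues n (ξ i) = 0) :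
    ∃ w : Fin n → ℝ, ∀ f : Polynomial ℝ, f.natDegree ≤ 2 * n - 1 →
      ∫ x in (-1 : ℝ)..1, f.eval x = ∑ i, w i * f.eval (ξ i) := by
  classical
  open Polynomial GaussLegendreAux MeasureTheory in
  -- notation
  set R : Polynomial ℝ := derivative^[n] (P n) with hR
  set Q : Polynomial ℝ := ∏ i : Fin n, (X - C (ξ i)) with hQ
  have hinj : Set.InjOn ξ (Finset.univ : Finset (Fin n)) := fun i _ j _ h =>
    hmono.injective h
  have hQmonic : Q.Monic :=
    monic_prod_of_monic _ _ fun i _ => monic_X_sub_C (ξ i)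
  have hQdeg : Q.natDegree = n := by
    rw [hQ, natDegree_prod_of_monic _ _ fun i _ => monic_X_sub_C (ξ i)]
    simp
  have hQdegree : Q.degree = (n : ℕ) := by
    rw [degree_eq_natDegree hQmonic.ne_zero, hQdeg]
  have hQeval : ∀ i, Q.eval (ξ i) = 0 := by
    intro i
    rw [hQ, eval_prod]
    exact Finset.prod_eq_zero (Finset.mem_univ i) (by simp)
  have hReval : ∀ i, R.eval (ξ i) = 0 := by
    intro i
    have := hroot i
    rwa [rodrigues_eq] at this
  -- Q divides R, hence R = Q * C d with d ≠ 0
  have hmod : R %ₘ Q = 0 := by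
    refine Polynomial.eq_zero_of_degree_lt_of_eval_index_eq_zero
      (Finset.univ : Finset (Fin n)) hinj ?_ ?_
    · rw [Finset.card_univ, Fintype.card_fin]
      exact lt_of_lt_of_le (degree_modByMonic_lt R hQmonic) (le_of_eq hQdegree)
    · intro i _
      have h := Polynomial.modByMonic_add_div R Q
      have := congrArg (Polynomial.eval (ξ i)) h
      simp only [eval_add, eval_mul, hQeval i, zero_mul, add_zero] at this
      rw [this, hReval i]
  have hRQ : R = Q * (R /ₘ Q) := by
    have h := Polynomial.modByMonic_add_div R Q
    rw [hmod, zero_add] at h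
    exact h.symm
  have hDdeg : (R /ₘ Q).natDegree = 0 := by
    rw [Polynomial.natDegree_divByMonic R hQmonic, natDegree_R, hQdeg, Nat.sub_self]
  obtain ⟨d, hd⟩ := Polynomial.natDegree_eq_zero.mp hDdeg
  have hdne : d ≠ 0 := by
    intro h
    apply R_ne_zero n
    rw [← hR, hRQ, ← hd, h, map_zero, mul_zero]
  have hQR : ∀ x : ℝ, Q.eval x = d⁻¹ * R.eval x := by
    intro x
    have : R.eval x = Q.eval x * d := by
      conv_lhs => rw [hRQ]
      rw [eval_mul, ← hd, eval_C]
    rw [this]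
    field_simp
  -- weights
  refine ⟨fun i => ∫ x in (-1 : ℝ)..1, (Lagrange.basis Finset.univ ξ i).eval x, ?_⟩
  intro f hf
  set g : Polynomial ℝ := f /ₘ Q with hg
  set r : Polynomial ℝ := f %ₘ Q with hr
  have hfeq : f = r + Q * g := (Polynomial.modByMonic_add_div f Q).symm
  have hgdeg : g.natDegree < n := by
    rw [hg, Polynomial.natDegree_divByMonic f hQmonic, hQdeg]
    omega
  have hrdeg : r.degree < (Finset.univ : Finset (Fin n)).card := by
    rw [Finset.card_univ, Fintype.card_fin]
    exact lt_of_lt_of_le (degree_modByMonic_lt f hQmonic) (le_of_eq hQdegree)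
  -- the Q*g part integrates to zero
  have hQg : (∫ x in (-1 : ℝ)..1, (Q * g).eval x) = 0 := by
    have h1 : ∀ x : ℝ, (Q * g).eval x = d⁻¹ * (R.eval x * g.eval x) := by
      intro x
      rw [eval_mul, hQR x]
      ring
    calc (∫ x in (-1 : ℝ)..1, (Q * g).eval x)
        = ∫ x in (-1 : ℝ)..1, d⁻¹ * (R.eval x * g.eval x) := by
          simp only [h1]
      _ = d⁻¹ * ∫ x in (-1 : ℝ)..1, R.eval x * g.eval x :=
          intervalIntegral.integral_const_mul _ _
      _ = 0 := by rw [hR, orth hgdeg, mul_zero]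
  -- f and r agree at the nodes
  have hfr : ∀ i, f.eval (ξ i) = r.eval (ξ i) := by
    intro i
    rw [hfeq]
    simp [hQeval i]
  -- r integrates via interpolation
  have hinterp : r = Lagrange.interpolate Finset.univ ξ fun i => r.eval (ξ i) :=
    Lagrange.eq_interpolate hinj hrdeg
  have hrint : (∫ x in (-1 : ℝ)..1, r.eval x)
      = ∑ i, (∫ x in (-1 : ℝ)..1, (Lagrange.basis Finset.univ ξ i).eval x) * r.eval (ξ i) := by
    conv_lhs => rw [hinterp]
    rw [Lagrange.interpolate_apply]
    have heval : ∀ x : ℝ,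
        (∑ i, C (r.eval (ξ i)) * Lagrange.basis Finset.univ ξ i).eval x
          = ∑ i, r.eval (ξ i) * (Lagrange.basis Finset.univ ξ i).eval x := by
      intro x
      rw [eval_finset_sum]
      exact Finset.sum_congr rfl fun i _ => by rw [eval_mul, eval_C]
    calc (∫ x in (-1 : ℝ)..1,
          (∑ i, C (r.eval (ξ i)) * Lagrange.basis Finset.univ ξ i).eval x)
        = ∫ x in (-1 : ℝ)..1,
            ∑ i, r.eval (ξ i) * (Lagrange.basis Finset.univ ξ i).eval x := by
          simp only [heval]
      _ = ∑ i, ∫ x in (-1 : ℝ)..1,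
            r.eval (ξ i) * (Lagrange.basis Finset.univ ξ i).eval x := by
          refine intervalIntegral.integral_finset_sum fun i _ => ?_
          exact (continuous_const.mul
            (Lagrange.basis Finset.univ ξ i).continuous).intervalIntegrable _ _
      _ = ∑ i, (∫ x in (-1 : ℝ)..1, (Lagrange.basis Finset.univ ξ i).eval x)
            * r.eval (ξ i) := by
          refine Finset.sum_congr rfl fun i _ => ?_
          rw [intervalIntegral.integral_const_mul]
          ring
  -- combine
  have hsplit : (∫ x in (-1 : ℝ)..1, f.eval x)
      = (∫ x in (-1 : ℝ)..1, r.eval x) + ∫ x in (-1 : ℝ)..1, (Q * g).eval x := by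
    rw [← intervalIntegral.integral_add
      (r.continuous.intervalIntegrable _ _) ((Q * g).continuous.intervalIntegrable _ _)]
    refine intervalIntegral.integral_congr fun x _ => ?_
    conv_lhs => rw [hfeq]
    simp
  rw [hsplit, hQg, add_zero, hrint]
  exact Finset.sum_congr rfl fun i _ => by rw [hfr i]
end
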